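/- In a finite-state MDP with undiscounted total cost, absorbing goal set G with zero cost, per-step costs c(b,u) ≥ c_min > 0, and at least one proper policy (a policy reaching G almost surely from every state), the optimal value function J* is the unique fixed point, among functions vanishing on G, of the Bellman operator (TJ)(b) = min_u [c(b,u) + Σ_{b'} p(b'|b,u) J(b')] restricted to the set of functions J with J ≥ 0 and J bounded above by the value of some proper policy. -/

import Mathlib

open Filter Topology

/-- Probability of reaching the goal set `G` within `n` steps under policy `π`. -/
noncomputable def polReachIter {B U : Type*} [Fintype B] [DecidableEq B]
    (p : B → U → B → ℝ) (π : B → U) (G : Finset B) : ℕ → B → ℝ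
  | 0, b => if b ∈ G then 1 else 0
  | n + 1, b =>
      if b ∈ G then 1 else ∑ b' : B, p b (π b) b' * polReachIter p π G n b'

/-- A policy is proper if it reaches `G` with probability 1 from every state. -/
def ProperPolicy {B U : Type*} [Fintype B] [DecidableEq B]
    (p : B → U → B → ℝ) (π : B → U) (G : Finset B) : Prop :=
  ∀ b : B, Tendsto (fun n => polReachIter p π G n b) atTop (nhds 1)

set_option linter.unusedSectionVars false
set_option linter.unusedVariables false

namespace SSPaux

variable {B U : Type*} [Fintype B] [DecidableEq B] [Fintype U] [Nonempty U]

lemma row_goal (p : B → U → B → ℝ) (G : Finset B)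
    (hp0 : ∀ b u b', 0 ≤ p b u b') (hp1 : ∀ b u, ∑ b' : B, p b u b' = 1)
    (habsG : ∀ g ∈ G, ∀ u, p g u g = 1)
    {g : B} (hg : g ∈ G) (u : U) (f : B → ℝ) :
    ∑ b' : B, p g u b' * f b' = f g := by
  have hz : ∀ b', b' ≠ g → p g u b' = 0 := by
    intro b' hne
    have h2 : p g u g + ∑ x ∈ Finset.univ.erase g, p g u x = 1 := by
      rw [Finset.add_sum_erase _ _ (Finset.mem_univ g)]; exact hp1 g u
    have h1 : ∑ x ∈ Finset.univ.erase g, p g u x = 0 := by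
      have := habsG g hg u; linarith
    have hle : p g u b' ≤ 0 := h1 ▸ Finset.single_le_sum (fun x _ => hp0 g u x)
        (Finset.mem_erase.mpr ⟨hne, Finset.mem_univ b'⟩)
    exact le_antisymm hle (hp0 g u b')
  rw [Finset.sum_eq_single g (fun b' _ hne => by rw [hz b' hne, zero_mul])
      (fun h => absurd (Finset.mem_univ g) h), habsG g hg u, one_mul]

/-- failure probability -/
noncomputable def qf (p : B → U → B → ℝ) (π : B → U) (G : Finset B) (n : ℕ) (b : B) : ℝ :=
  1 - polReachIter p π G n b

lemma reach_goal (p : B → U → B → ℝ) (π : B → U) (G : Finset B) (n : ℕ) {g : B} (hg : g ∈ G) :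
    polReachIter p π G n g = 1 := by
  cases n <;> simp [polReachIter, hg]

lemma qf_goal (p : B → U → B → ℝ) (π : B → U) (G : Finset B) (n : ℕ) {g : B} (hg : g ∈ G) :
    qf p π G n g = 0 := by
  simp [qf, reach_goal p π G n hg]

lemma qf_zero (p : B → U → B → ℝ) (π : B → U) (G : Finset B) {b : B} (hb : b ∉ G) :
    qf p π G 0 b = 1 := by
  simp [qf, polReachIter, hb]

lemma reach_bounds (p : B → U → B → ℝ) (π : B → U) (G : Finset B)
    (hp0 : ∀ b u b', 0 ≤ p b u b') (hp1 : ∀ b u, ∑ b' : B, p b u b' = 1) :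
    ∀ n b, 0 ≤ polReachIter p π G n b ∧ polReachIter p π G n b ≤ 1 := by
  intro n
  induction n with
  | zero => intro b; by_cases hb : b ∈ G <;> simp [polReachIter, hb]
  | succ n ih =>
    intro b
    by_cases hb : b ∈ G
    · simp [polReachIter, hb]
    · simp only [polReachIter, if_neg hb]
      constructor
      · exact Finset.sum_nonneg fun b' _ => mul_nonneg (hp0 b (π b) b') (ih b').1
      · calc ∑ b' : B, p b (π b) b' * polReachIter p π G n b'
            ≤ ∑ b' : B, p b (π b) b' * 1 :=
              Finset.sum_le_sum fun b' _ => mul_le_mul_of_nonneg_left (ih b').2 (hp0 b (π b) b')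
          _ = 1 := by simpa using hp1 b (π b)

lemma qf_nonneg (p : B → U → B → ℝ) (π : B → U) (G : Finset B)
    (hp0 : ∀ b u b', 0 ≤ p b u b') (hp1 : ∀ b u, ∑ b' : B, p b u b' = 1) (n : ℕ) (b : B) :
    0 ≤ qf p π G n b :=
  sub_nonneg.mpr (reach_bounds p π G hp0 hp1 n b).2

lemma qf_le_one (p : B → U → B → ℝ) (π : B → U) (G : Finset B)
    (hp0 : ∀ b u b', 0 ≤ p b u b') (hp1 : ∀ b u, ∑ b' : B, p b u b' = 1) (n : ℕ) (b : B) :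
    qf p π G n b ≤ 1 := by
  have := (reach_bounds p π G hp0 hp1 n b).1
  simp only [qf]; linarith

lemma qf_succ (p : B → U → B → ℝ) (π : B → U) (G : Finset B)
    (hp0 : ∀ b u b', 0 ≤ p b u b') (hp1 : ∀ b u, ∑ b' : B, p b u b' = 1)
    (habsG : ∀ g ∈ G, ∀ u, p g u g = 1) (n : ℕ) (b : B) :
    qf p π G (n + 1) b = ∑ b' : B, p b (π b) b' * qf p π G n b' := by
  by_cases hb : b ∈ G
  · rw [qf_goal p π G _ hb, row_goal p G hp0 hp1 habsG hb, qf_goal p π G _ hb]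
  · simp only [qf, polReachIter, if_neg hb, mul_sub, Finset.sum_sub_distrib, mul_one, hp1 b (π b)]

lemma qf_antitone (p : B → U → B → ℝ) (π : B → U) (G : Finset B)
    (hp0 : ∀ b u b', 0 ≤ p b u b') (hp1 : ∀ b u, ∑ b' : B, p b u b' = 1)
    (habsG : ∀ g ∈ G, ∀ u, p g u g = 1) :
    ∀ n b, qf p π G (n + 1) b ≤ qf p π G n b := by
  intro n
  induction n with
  | zero =>
    intro b
    by_cases hb : b ∈ G
    · rw [qf_goal p π G _ hb, qf_goal p π G _ hb]
    · rw [qf_zero p π G hb]; exact qf_le_one p π G hp0 hp1 1 b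
  | succ n ih =>
    intro b
    rw [qf_succ p π G hp0 hp1 habsG (n + 1) b, qf_succ p π G hp0 hp1 habsG n b]
    exact Finset.sum_le_sum fun b' _ => mul_le_mul_of_nonneg_left (ih b') (hp0 b (π b) b')

lemma qf_submul (p : B → U → B → ℝ) (π : B → U) (G : Finset B)
    (hp0 : ∀ b u b', 0 ≤ p b u b') (hp1 : ∀ b u, ∑ b' : B, p b u b' = 1)
    (habsG : ∀ g ∈ G, ∀ u, p g u g = 1)
    {n : ℕ} {C : ℝ} (hC : 0 ≤ C) (hCb : ∀ b, qf p π G n b ≤ C) :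
    ∀ m b, qf p π G (m + n) b ≤ qf p π G m b * C := by
  intro m
  induction m with
  | zero =>
    intro b
    by_cases hb : b ∈ G
    · rw [qf_goal p π G _ hb, qf_goal p π G _ hb, zero_mul]
    · rw [qf_zero p π G hb, one_mul, zero_add]; exact hCb b
  | succ m ih =>
    intro b
    have : m + 1 + n = (m + n) + 1 := by omega
    rw [this, qf_succ p π G hp0 hp1 habsG (m + n) b, qf_succ p π G hp0 hp1 habsG m b,
      Finset.sum_mul]
    refine Finset.sum_le_sum fun b' _ => ?_
    rw [mul_assoc]
    exact mul_le_mul_of_nonneg_left (ih b') (hp0 b (π b) b')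


lemma qf_tendsto_zero (p : B → U → B → ℝ) (π : B → U) (G : Finset B)
    (hπ : ProperPolicy p π G) (b : B) :
    Tendsto (fun n => qf p π G n b) atTop (nhds 0) := by
  have h := (tendsto_const_nhds (x := (1 : ℝ)) (f := atTop)).sub (hπ b)
  simpa [qf] using h

lemma qf_partial_sum_bound (p : B → U → B → ℝ) (π : B → U) (G : Finset B)
    (hp0 : ∀ b u b', 0 ≤ p b u b') (hp1 : ∀ b u, ∑ b' : B, p b u b' = 1)
    (habsG : ∀ g ∈ G, ∀ u, p g u g = 1) (hπ : ProperPolicy p π G) :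
    ∃ n₀ : ℕ, 1 ≤ n₀ ∧ ∀ n b, ∑ k ∈ Finset.range n, qf p π G k b ≤ 2 * n₀ := by
  have h2 : ∀ b : B, ∀ᶠ n in atTop, qf p π G n b ≤ 1 / 2 := by
    intro b
    have hq := qf_tendsto_zero p π G hπ b
    exact (hq.eventually (gt_mem_nhds (by norm_num : (0 : ℝ) < 1 / 2))).mono
      fun n h => le_of_lt h
  have hall : ∀ᶠ n in atTop, ∀ b : B, qf p π G n b ≤ 1 / 2 := eventually_all.mpr h2
  obtain ⟨n₀, hn₀1, hn₀⟩ := ((eventually_ge_atTop 1).and hall).exists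
  refine ⟨n₀, hn₀1, ?_⟩
  intro n
  induction n using Nat.strong_induction_on with
  | _ n ih =>
    intro b
    by_cases hn : n ≤ n₀
    · calc ∑ k ∈ Finset.range n, qf p π G k b ≤ ∑ _k ∈ Finset.range n, (1 : ℝ) :=
            Finset.sum_le_sum fun k _ => qf_le_one p π G hp0 hp1 k b
        _ = n := by simp
        _ ≤ n₀ := by exact_mod_cast hn
        _ ≤ 2 * n₀ := by push_cast; linarith [Nat.cast_nonneg (α := ℝ) n₀]
    · push_neg at hn
      have hsplit : n = n₀ + (n - n₀) := by omega
      rw [hsplit, Finset.sum_range_add]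
      have h1 : ∑ i ∈ Finset.range n₀, qf p π G i b ≤ (n₀ : ℝ) := by
        calc ∑ i ∈ Finset.range n₀, qf p π G i b ≤ ∑ _i ∈ Finset.range n₀, (1 : ℝ) :=
              Finset.sum_le_sum fun k _ => qf_le_one p π G hp0 hp1 k b
          _ = n₀ := by simp
      have h2' : ∑ i ∈ Finset.range (n - n₀), qf p π G (n₀ + i) b ≤ (n₀ : ℝ) := by
        have hterm : ∀ i ∈ Finset.range (n - n₀),
            qf p π G (n₀ + i) b ≤ qf p π G i b * (1 / 2) := by
          intro i _
          have := qf_submul p π G hp0 hp1 habsG (n := n₀) (C := 1 / 2) (by norm_num) hn₀ i b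
          rw [Nat.add_comm n₀ i]
          exact this
        calc ∑ i ∈ Finset.range (n - n₀), qf p π G (n₀ + i) b
            ≤ ∑ i ∈ Finset.range (n - n₀), qf p π G i b * (1 / 2) :=
              Finset.sum_le_sum hterm
          _ = (∑ i ∈ Finset.range (n - n₀), qf p π G i b) * (1 / 2) := by
              rw [Finset.sum_mul]
          _ ≤ (2 * n₀) * (1 / 2) := by
              have hlt : n - n₀ < n := by omega
              have := ih (n - n₀) hlt b
              nlinarith [Finset.sum_nonneg
                (fun i (_ : i ∈ Finset.range (n - n₀)) => qf_nonneg p π G hp0 hp1 i b)]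
          _ = n₀ := by ring
      linarith

/-- The Bellman operator. -/
noncomputable def Tbel (p : B → U → B → ℝ) (c : B → U → ℝ) (G : Finset B) (J : B → ℝ) :
    B → ℝ :=
  fun b => if b ∈ G then 0 else ⨅ u : U, (c b u + ∑ b' : B, p b u b' * J b')

lemma Tbel_mono (p : B → U → B → ℝ) (c : B → U → ℝ) (G : Finset B)
    (hp0 : ∀ b u b', 0 ≤ p b u b') {J J' : B → ℝ} (h : ∀ b, J b ≤ J' b) :
    ∀ b, Tbel p c G J b ≤ Tbel p c G J' b := by
  intro b
  unfold Tbel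
  split
  · exact le_refl _
  · exact ciInf_mono (Finite.bddBelow_range _) fun u =>
      add_le_add le_rfl (Finset.sum_le_sum fun b' _ =>
        mul_le_mul_of_nonneg_left (h b') (hp0 b u b'))

lemma Tbel_le_pol (p : B → U → B → ℝ) (c : B → U → ℝ) (G : Finset B)
    (J : B → ℝ) {b : B} (hb : b ∉ G) (u : U) :
    Tbel p c G J b ≤ c b u + ∑ b' : B, p b u b' * J b' := by
  unfold Tbel
  rw [if_neg hb]
  exact ciInf_le (Finite.bddBelow_range _) u

lemma ciInf_attained (f : U → ℝ) : ∃ u : U, (⨅ v : U, f v) = f u := by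
  obtain ⟨u, hu⟩ := Finite.exists_min f
  exact ⟨u, le_antisymm (ciInf_le (Finite.bddBelow_range f) u) (le_ciInf hu)⟩

lemma abs_ciInf_sub {f g : U → ℝ} {C : ℝ} (h : ∀ u, |f u - g u| ≤ C) :
    |(⨅ u : U, f u) - ⨅ u : U, g u| ≤ C := by
  obtain ⟨u₀, h₀⟩ := ciInf_attained f
  obtain ⟨u₁, h₁⟩ := ciInf_attained g
  rw [h₀, h₁, abs_le]
  have hg0 : g u₁ ≤ g u₀ := h₁ ▸ ciInf_le (Finite.bddBelow_range g) u₀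
  have hf1 : f u₀ ≤ f u₁ := h₀ ▸ ciInf_le (Finite.bddBelow_range f) u₁
  have ha0 := abs_le.mp (h u₀)
  have ha1 := abs_le.mp (h u₁)
  constructor <;> linarith [ha0.1, ha0.2, ha1.1, ha1.2]

lemma tendsto_Tbel (p : B → U → B → ℝ) (c : B → U → ℝ) (G : Finset B)
    (hp0 : ∀ b u b', 0 ≤ p b u b') (hp1 : ∀ b u, ∑ b' : B, p b u b' = 1)
    (x : ℕ → B → ℝ) (J : B → ℝ)
    (hx : ∀ b, Tendsto (fun n => x n b) atTop (nhds (J b))) (b : B) :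
    Tendsto (fun n => Tbel p c G (x n) b) atTop (nhds (Tbel p c G J b)) := by
  by_cases hb : b ∈ G
  · simp only [Tbel, if_pos hb]; exact tendsto_const_nhds
  · have hE : Tendsto (fun n => ∑ b' : B, |x n b' - J b'|) atTop (nhds 0) := by
      have : (0 : ℝ) = ∑ _b' : B, (0 : ℝ) := by simp
      rw [this]
      refine tendsto_finset_sum _ fun b' _ => ?_
      have h := ((hx b').sub (tendsto_const_nhds (x := J b'))).abs
      simpa using h
    have hple : ∀ u b', p b u b' ≤ 1 := by
      intro u b'
      calc p b u b' ≤ ∑ x : B, p b u x :=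
            Finset.single_le_sum (fun x _ => hp0 b u x) (Finset.mem_univ b')
        _ = 1 := hp1 b u
    have hbound : ∀ n, |Tbel p c G (x n) b - Tbel p c G J b| ≤ ∑ b' : B, |x n b' - J b'| := by
      intro n
      simp only [Tbel, if_neg hb]
      apply abs_ciInf_sub
      intro u
      have heq : (c b u + ∑ b' : B, p b u b' * x n b') - (c b u + ∑ b' : B, p b u b' * J b')
          = ∑ b' : B, p b u b' * (x n b' - J b') := by
        simp [mul_sub, Finset.sum_sub_distrib]
      rw [heq]
      calc |∑ b' : B, p b u b' * (x n b' - J b')| ≤ ∑ b' : B, |p b u b' * (x n b' - J b')| :=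
            Finset.abs_sum_le_sum_abs _ _
        _ ≤ ∑ b' : B, |x n b' - J b'| := Finset.sum_le_sum fun b' _ => by
            rw [abs_mul, abs_of_nonneg (hp0 b u b')]
            exact mul_le_of_le_one_left (abs_nonneg _) (hple u b')
    rw [← tendsto_sub_nhds_zero_iff]
    exact squeeze_zero_norm (fun n => by rw [Real.norm_eq_abs]; exact hbound n) hE


lemma iter_fixed (F : (B → ℝ) → B → ℝ)
    (hcont : ∀ (x : ℕ → B → ℝ) (J : B → ℝ),
      (∀ b, Tendsto (fun n => x n b) atTop (nhds (J b))) →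
      ∀ b, Tendsto (fun n => F (x n) b) atTop (nhds (F J b)))
    (x : ℕ → B → ℝ) (hrec : ∀ n b, x (n + 1) b = F (x n) b)
    (hmono : ∀ n b, x n b ≤ x (n + 1) b) (C : ℝ) (hbd : ∀ n b, x n b ≤ C) :
    ∃ J : B → ℝ, (∀ b, F J b = J b) ∧ (∀ n b, x n b ≤ J b) ∧ (∀ b, J b ≤ C) := by
  set J : B → ℝ := fun b => ⨆ n, x n b with hJ
  have hbdd : ∀ b, BddAbove (Set.range fun n => x n b) := by
    intro b; exact ⟨C, by rintro y ⟨n, rfl⟩; exact hbd n b⟩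
  have hmon : ∀ b, Monotone fun n => x n b :=
    fun b => monotone_nat_of_le_succ fun n => hmono n b
  have htend : ∀ b, Tendsto (fun n => x n b) atTop (nhds (J b)) :=
    fun b => tendsto_atTop_ciSup (hmon b) (hbdd b)
  have hFt := hcont x J htend
  refine ⟨J, fun b => ?_, fun n b => le_ciSup (hbdd b) n, fun b => ciSup_le fun n => hbd n b⟩
  have h2 : Tendsto (fun n => x (n + 1) b) atTop (nhds (J b)) :=
    (htend b).comp (tendsto_add_atTop_nat 1)
  have h3 : (fun n => x (n + 1) b) = fun n => F (x n) b := funext fun n => hrec n b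
  exact tendsto_nhds_unique (hFt b) (h3 ▸ h2)

/-- The greedy policy for a Bellman fixed point is proper, and the fixed point
satisfies the policy evaluation equation for it. -/
lemma greedy_proper (p : B → U → B → ℝ) (c : B → U → ℝ) (G : Finset B) (cmin : ℝ)
    (hp0 : ∀ b u b', 0 ≤ p b u b') (hp1 : ∀ b u, ∑ b' : B, p b u b' = 1)
    (habsG : ∀ g ∈ G, ∀ u, p g u g = 1) (hcmin : 0 < cmin)
    (hc : ∀ b, b ∉ G → ∀ u, cmin ≤ c b u)
    (J : B → ℝ) (hJG : ∀ g ∈ G, J g = 0) (hJ0 : ∀ b, 0 ≤ J b)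
    (hfix : ∀ b, b ∉ G → J b = ⨅ u : U, (c b u + ∑ b' : B, p b u b' * J b')) :
    ∃ μ : B → U, ProperPolicy p μ G ∧
      ∀ b, b ∉ G → J b = c b (μ b) + ∑ b' : B, p b (μ b) b' * J b' := by
  have hμ : ∀ b : B, ∃ u : U, (⨅ v : U, (c b v + ∑ b' : B, p b v b' * J b'))
      = c b u + ∑ b' : B, p b u b' * J b' :=
    fun b => ciInf_attained _
  choose μ hμs using hμ
  have heval : ∀ b, b ∉ G → J b = c b (μ b) + ∑ b' : B, p b (μ b) b' * J b' :=
    fun b hb => (hfix b hb).trans (hμs b)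
  refine ⟨μ, ?_, heval⟩
  -- key inequality: cmin * (partial sums of failure probabilities) ≤ J
  have hkey : ∀ n b, cmin * ∑ k ∈ Finset.range n, qf p μ G k b ≤ J b := by
    intro n
    induction n with
    | zero => intro b; simpa using hJ0 b
    | succ n ih =>
      intro b
      by_cases hb : b ∈ G
      · have : ∀ k ∈ Finset.range (n + 1), qf p μ G k b = 0 :=
          fun k _ => qf_goal p μ G k hb
        rw [Finset.sum_congr rfl this]
        simp [hJG b hb]
      · have hrec : J b = c b (μ b) + ∑ b' : B, p b (μ b) b' * J b' := heval b hb
        have hsum : ∑ b' : B, p b (μ b) b' * (cmin * ∑ k ∈ Finset.range n, qf p μ G k b')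
            ≤ ∑ b' : B, p b (μ b) b' * J b' :=
          Finset.sum_le_sum fun b' _ => mul_le_mul_of_nonneg_left (ih b') (hp0 b (μ b) b')
        have hswap : ∑ b' : B, p b (μ b) b' * (cmin * ∑ k ∈ Finset.range n, qf p μ G k b')
            = cmin * ∑ k ∈ Finset.range n, qf p μ G (k + 1) b := by
          calc ∑ b' : B, p b (μ b) b' * (cmin * ∑ k ∈ Finset.range n, qf p μ G k b')
              = cmin * ∑ b' : B, ∑ k ∈ Finset.range n, p b (μ b) b' * qf p μ G k b' := by
                simp only [Finset.mul_sum]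
                exact Finset.sum_congr rfl fun b' _ =>
                  Finset.sum_congr rfl fun k _ => by ring
            _ = cmin * ∑ k ∈ Finset.range n, ∑ b' : B, p b (μ b) b' * qf p μ G k b' := by
                rw [Finset.sum_comm]
            _ = cmin * ∑ k ∈ Finset.range n, qf p μ G (k + 1) b :=
                congrArg _ (Finset.sum_congr rfl fun k _ =>
                  (qf_succ p μ G hp0 hp1 habsG k b).symm)
        have hle2 : cmin * ∑ k ∈ Finset.range n, qf p μ G (k + 1) b
            ≤ ∑ b' : B, p b (μ b) b' * J b' := hswap ▸ hsum
        have hc' := hc b hb (μ b)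
        rw [Finset.sum_range_succ', qf_zero p μ G hb, mul_add, mul_one]
        linarith
  -- properness from the key inequality
  have santi : ∀ b : B, Antitone fun n => qf p μ G n b :=
    fun b => antitone_nat_of_succ_le fun n => qf_antitone p μ G hp0 hp1 habsG n b
  have hub : ∀ (n : ℕ) (b : B), (n : ℝ) * qf p μ G n b ≤ J b / cmin := by
    intro n b
    have h1 : (n : ℝ) * qf p μ G n b ≤ ∑ k ∈ Finset.range n, qf p μ G k b := by
      calc (n : ℝ) * qf p μ G n b = ∑ _k ∈ Finset.range n, qf p μ G n b := by
            rw [Finset.sum_const, Finset.card_range, nsmul_eq_mul]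
        _ ≤ ∑ k ∈ Finset.range n, qf p μ G k b :=
            Finset.sum_le_sum fun k hk => santi b (le_of_lt (Finset.mem_range.mp hk))
    have h2 := hkey n b
    rw [le_div_iff₀ hcmin]
    nlinarith
  intro b
  have hq0 : Tendsto (fun n => qf p μ G n b) atTop (nhds 0) := by
    apply squeeze_zero' (Eventually.of_forall fun n => qf_nonneg p μ G hp0 hp1 n b)
      (g := fun n : ℕ => (J b / cmin) / n)
    · filter_upwards [eventually_ge_atTop 1] with n hn
      have hnpos : (0 : ℝ) < n := by exact_mod_cast hn
      rw [le_div_iff₀ hnpos]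
      have := hub n b
      nlinarith
    · exact tendsto_const_div_atTop_nhds_zero_nat _
  have := (tendsto_const_nhds (x := (1 : ℝ)) (f := atTop)).sub hq0
  simp only [sub_zero] at this
  have heq : (fun n => 1 - qf p μ G n b) = fun n => polReachIter p μ G n b := by
    funext n; simp [qf]
  rw [heq] at this
  exact this


/-- Iterated application of the transition operator of a policy. -/
noncomputable def Pit {B U : Type*} [Fintype B] (p : B → U → B → ℝ) (π : B → U) :
    ℕ → (B → ℝ) → B → ℝ
  | 0, f => f
  | n + 1, f => fun b => ∑ b' : B, p b (π b) b' * Pit p π n f b'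

lemma fixed_le_pol (p : B → U → B → ℝ) (c : B → U → ℝ) (G : Finset B)
    (hp0 : ∀ b u b', 0 ≤ p b u b') (hp1 : ∀ b u, ∑ b' : B, p b u b' = 1)
    (habsG : ∀ g ∈ G, ∀ u, p g u g = 1)
    (J V : B → ℝ) (π : B → U) (hπ : ProperPolicy p π G)
    (hJG : ∀ g ∈ G, J g = 0) (hVG : ∀ g ∈ G, V g = 0)
    (hJle : ∀ b, b ∉ G → J b ≤ c b (π b) + ∑ b' : B, p b (π b) b' * J b')
    (hVeq : ∀ b, b ∉ G → V b = c b (π b) + ∑ b' : B, p b (π b) b' * V b') :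
    ∀ b, J b ≤ V b := by
  cases isEmpty_or_nonempty B with
  | inl hE => exact fun b => hE.elim b
  | inr hNE =>
    set D : B → ℝ := fun b => J b - V b with hD
    have hstep : ∀ b, D b ≤ ∑ b' : B, p b (π b) b' * D b' := by
      intro b
      by_cases hb : b ∈ G
      · rw [row_goal p G hp0 hp1 habsG hb]
      · have h1 := hJle b hb
        have h2 := hVeq b hb
        have h3 : ∑ b' : B, p b (π b) b' * D b'
            = (∑ b' : B, p b (π b) b' * J b') - ∑ b' : B, p b (π b) b' * V b' := by
          simp [hD, mul_sub, Finset.sum_sub_distrib]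
        rw [h3]
        simp only [hD]
        linarith
    obtain ⟨M0, hM0⟩ := Finite.exists_le D
    set M := max M0 0 with hMdef
    have hM : ∀ b, D b ≤ M := fun b => (hM0 b).trans (le_max_left _ _)
    have hM0' : 0 ≤ M := le_max_right _ _
    have claim1 : ∀ n b, D b ≤ Pit p π n D b := by
      intro n
      induction n with
      | zero => exact fun b => le_refl _
      | succ n ih =>
        intro b
        calc D b ≤ ∑ b' : B, p b (π b) b' * D b' := hstep b
          _ ≤ ∑ b' : B, p b (π b) b' * Pit p π n D b' :=
            Finset.sum_le_sum fun b' _ => mul_le_mul_of_nonneg_left (ih b') (hp0 b (π b) b')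
          _ = Pit p π (n + 1) D b := rfl
    have claim2 : ∀ n b, Pit p π n D b ≤ M * qf p π G n b := by
      intro n
      induction n with
      | zero =>
        intro b
        by_cases hb : b ∈ G
        · have : D b = 0 := by simp [hD, hJG b hb, hVG b hb]
          rw [qf_goal p π G 0 hb]
          simp [Pit, this]
        · rw [qf_zero p π G hb, mul_one]
          exact hM b
      | succ n ih =>
        intro b
        calc Pit p π (n + 1) D b = ∑ b' : B, p b (π b) b' * Pit p π n D b' := rfl
          _ ≤ ∑ b' : B, p b (π b) b' * (M * qf p π G n b') :=
            Finset.sum_le_sum fun b' _ => mul_le_mul_of_nonneg_left (ih b') (hp0 b (π b) b')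
          _ = M * ∑ b' : B, p b (π b) b' * qf p π G n b' := by
            rw [Finset.mul_sum]
            exact Finset.sum_congr rfl fun b' _ => by ring
          _ = M * qf p π G (n + 1) b := by
            rw [qf_succ p π G hp0 hp1 habsG n b]
    intro b
    have hlim : Tendsto (fun n => M * qf p π G n b) atTop (nhds 0) := by
      have := (qf_tendsto_zero p π G hπ b).const_mul M
      simpa using this
    have hD0 : D b ≤ 0 := ge_of_tendsto' hlim fun n => (claim1 n b).trans (claim2 n b)
    simp only [hD] at hD0
    linarith


lemma exists_fixed_point [Nonempty B] (p : B → U → B → ℝ) (c : B → U → ℝ) (G : Finset B)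
    (cmin : ℝ)
    (hp0 : ∀ b u b', 0 ≤ p b u b') (hp1 : ∀ b u, ∑ b' : B, p b u b' = 1)
    (habsG : ∀ g ∈ G, ∀ u, p g u g = 1)
    (hcmin : 0 < cmin) (hc : ∀ b, b ∉ G → ∀ u, cmin ≤ c b u)
    (π₀ : B → U) (hπ₀ : ProperPolicy p π₀ G) :
    ∃ J : B → ℝ, (∀ g ∈ G, J g = 0) ∧ (∀ b, 0 ≤ J b) ∧
      (∀ b, b ∉ G → J b = ⨅ u : U, (c b u + ∑ b' : B, p b u b' * J b')) := by
  classical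
  set x : ℕ → B → ℝ := fun n => (Tbel p c G)^[n] (fun _ => 0) with hx
  have hrec : ∀ n b, x (n + 1) b = Tbel p c G (x n) b := by
    intro n b
    simp [hx, Function.iterate_succ_apply']
  have hc0 : ∀ b, b ∉ G → ∀ u, 0 ≤ c b u := fun b hb u => hcmin.le.trans (hc b hb u)
  have hTnonneg : ∀ J : B → ℝ, (∀ b, 0 ≤ J b) → ∀ b, 0 ≤ Tbel p c G J b := by
    intro J hJ b
    unfold Tbel
    split
    · exact le_refl _
    · next hb =>
      exact le_ciInf fun u => add_nonneg (hc0 b hb u)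
        (Finset.sum_nonneg fun b' _ => mul_nonneg (hp0 b u b') (hJ b'))
  have hxnonneg : ∀ n b, 0 ≤ x n b := by
    intro n
    induction n with
    | zero => intro b; simp [hx]
    | succ n ih => intro b; rw [hrec n b]; exact hTnonneg (x n) ih b
  have hmono : ∀ n b, x n b ≤ x (n + 1) b := by
    intro n
    induction n with
    | zero => intro b; rw [hrec 0 b]; exact hTnonneg (x 0) (hxnonneg 0) b |>.trans_eq' (by simp [hx])
    | succ n ih =>
      intro b
      rw [hrec n b, hrec (n + 1) b]
      exact Tbel_mono p c G hp0 ih b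
  obtain ⟨C0, hC0⟩ := Finite.exists_le (fun bu : B × U => c bu.1 bu.2)
  set Cm := max C0 0 with hCmdef
  have hCm : ∀ b u, c b u ≤ Cm := fun b u => (hC0 (b, u)).trans (le_max_left _ _)
  have hCm0 : (0 : ℝ) ≤ Cm := le_max_right _ _
  obtain ⟨n₀, hn₀1, hn₀sum⟩ := qf_partial_sum_bound p π₀ G hp0 hp1 habsG hπ₀
  have hbd : ∀ n b, x n b ≤ Cm * ∑ k ∈ Finset.range n, qf p π₀ G k b := by
    intro n
    induction n with
    | zero => intro b; simp [hx]
    | succ n ih =>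
      intro b
      rw [hrec n b]
      by_cases hb : b ∈ G
      · simp only [Tbel, if_pos hb]
        exact mul_nonneg hCm0 (Finset.sum_nonneg fun k _ => qf_nonneg p π₀ G hp0 hp1 k b)
      · refine (Tbel_le_pol p c G (x n) hb (π₀ b)).trans ?_
        have hsum : ∑ b' : B, p b (π₀ b) b' * x n b'
            ≤ ∑ b' : B, p b (π₀ b) b' * (Cm * ∑ k ∈ Finset.range n, qf p π₀ G k b') :=
          Finset.sum_le_sum fun b' _ => mul_le_mul_of_nonneg_left (ih b') (hp0 b (π₀ b) b')
        have hswap : ∑ b' : B, p b (π₀ b) b' * (Cm * ∑ k ∈ Finset.range n, qf p π₀ G k b')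
            = Cm * ∑ k ∈ Finset.range n, qf p π₀ G (k + 1) b := by
          calc ∑ b' : B, p b (π₀ b) b' * (Cm * ∑ k ∈ Finset.range n, qf p π₀ G k b')
              = Cm * ∑ b' : B, ∑ k ∈ Finset.range n, p b (π₀ b) b' * qf p π₀ G k b' := by
                simp only [Finset.mul_sum]
                exact Finset.sum_congr rfl fun b' _ =>
                  Finset.sum_congr rfl fun k _ => by ring
            _ = Cm * ∑ k ∈ Finset.range n, ∑ b' : B, p b (π₀ b) b' * qf p π₀ G k b' := by
                rw [Finset.sum_comm]
            _ = Cm * ∑ k ∈ Finset.range n, qf p π₀ G (k + 1) b :=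
                congrArg _ (Finset.sum_congr rfl fun k _ =>
                  (qf_succ p π₀ G hp0 hp1 habsG k b).symm)
        have hcb := hCm b (π₀ b)
        rw [Finset.sum_range_succ', qf_zero p π₀ G hb, mul_add, mul_one]
        linarith [hswap ▸ hsum]
  have hbd' : ∀ n b, x n b ≤ Cm * (2 * n₀) :=
    fun n b => (hbd n b).trans (mul_le_mul_of_nonneg_left (hn₀sum n b) hCm0)
  obtain ⟨J, hfixJ, hlow, _⟩ := iter_fixed (Tbel p c G) (tendsto_Tbel p c G hp0 hp1)
    x hrec hmono (Cm * (2 * n₀)) hbd'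
  refine ⟨J, ?_, ?_, ?_⟩
  · intro g hg
    rw [← hfixJ g]
    simp [Tbel, hg]
  · intro b
    have := hlow 0 b
    simpa [hx] using this
  · intro b hb
    rw [← hfixJ b]
    simp only [Tbel, if_neg hb]

end SSPaux

/-- Stochastic-shortest-path Bellman uniqueness: with per-step costs `≥ c_min > 0`
off the zero-cost absorbing goal set `G` and at least one proper policy, the optimal
value function `J*` is the unique fixed point of the (undiscounted) Bellman operator
among nonnegative functions vanishing on `G` and dominated by the value of some
proper policy. -/
theorem ssp_bellman_unique_fixed_point
    {B U : Type*} [Fintype B] [DecidableEq B] [Fintype U] [Nonempty U]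
    (p : B → U → B → ℝ) (c : B → U → ℝ) (G : Finset B) (cmin : ℝ)
    (hp0 : ∀ b u b', 0 ≤ p b u b') (hp1 : ∀ b u, ∑ b' : B, p b u b' = 1)
    (habsG : ∀ g ∈ G, ∀ u, p g u g = 1)
    (hGc : ∀ g ∈ G, ∀ u, c g u = 0)
    (hcmin : 0 < cmin) (hc : ∀ b, b ∉ G → ∀ u, cmin ≤ c b u)
    (hproper : ∃ π : B → U, ProperPolicy p π G) :
    ∃! J : B → ℝ,
      -- J vanishes on G, is nonnegative, and is bounded above by the value of
      -- some proper policy ...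
      ((∀ g ∈ G, J g = 0) ∧ (∀ b, 0 ≤ J b) ∧
        (∃ (π : B → U) (V : B → ℝ), ProperPolicy p π G ∧
          (∀ g ∈ G, V g = 0) ∧ (∀ b, 0 ≤ V b) ∧
          (∀ b, b ∉ G → V b = c b (π b) + ∑ b' : B, p b (π b) b' * V b') ∧
          (∀ b, J b ≤ V b))) ∧
      -- ... and J is a fixed point of the Bellman operator
      (∀ b, b ∉ G → J b = ⨅ u : U, (c b u + ∑ b' : B, p b u b' * J b')) := by
  
  classical
  obtain ⟨π₀, hπ₀⟩ := hproper
  cases isEmpty_or_nonempty B with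
  | inl hE =>
    refine ⟨fun _ => 0,
      ⟨⟨fun g _ => rfl, fun b => le_refl 0,
        π₀, fun _ => 0, hπ₀, fun g _ => rfl, fun b => le_refl 0,
        fun b _ => hE.elim b, fun b => le_refl 0⟩,
        fun b _ => hE.elim b⟩,
      fun J' _ => funext fun b => hE.elim b⟩
  | inr hNE =>
    obtain ⟨J, hJG, hJ0, hJfix⟩ :=
      SSPaux.exists_fixed_point p c G cmin hp0 hp1 habsG hcmin hc π₀ hπ₀
    obtain ⟨μ, hμprop, hμeval⟩ :=
      SSPaux.greedy_proper p c G cmin hp0 hp1 habsG hcmin hc J hJG hJ0 hJfix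
    refine ⟨J, ⟨⟨hJG, hJ0, μ, J, hμprop, hJG, hJ0, hμeval, fun b => le_refl _⟩, hJfix⟩, ?_⟩
    rintro J' ⟨⟨hJ'G, hJ'0, -⟩, hJ'fix⟩
    obtain ⟨μ', hμ'prop, hμ'eval⟩ :=
      SSPaux.greedy_proper p c G cmin hp0 hp1 habsG hcmin hc J' hJ'G hJ'0 hJ'fix
    have h1 : ∀ b, J' b ≤ J b :=
      SSPaux.fixed_le_pol p c G hp0 hp1 habsG J' J μ hμprop hJ'G hJG
        (fun b hb => (hJ'fix b hb).le.trans (ciInf_le (Finite.bddBelow_range _) (μ b)))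
        hμeval
    have h2 : ∀ b, J b ≤ J' b :=
      SSPaux.fixed_le_pol p c G hp0 hp1 habsG J J' μ' hμ'prop hJG hJ'G
        (fun b hb => (hJfix b hb).le.trans (ciInf_le (Finite.bddBelow_range _) (μ' b)))
        hμ'eval
    exact funext fun b => le_antisymm (h1 b) (h2 b)
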